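/- Let V be a complex Banach space, Δ : V → V a continuous ℂ-linear map, s₀ ∈ ℂ, r > 0, and N ≥ 1 an integer. Let (aₙ)_{n ≥ −N} be vectors in V such that the Laurent series E(s) = Σ_{n ≥ −N} aₙ (s − s₀)ⁿ converges in V for all s with 0 < |s − s₀| < r, and let λ be a ℂ-valued function analytic on the disc |s − s₀| < r. If Δ(E(s)) = λ(s) • E(s) for all s with 0 < |s − s₀| < r, then the leading Laurent coefficient satisfies the genuine eigenvalue equation: Δ(a₋ₙ) = λ(s₀) • a₋ₙ for n = N, i.e., Δ(a_{−N}) = λ(s₀) • a_{−N}. -/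

import Mathlib

open Filter Topology

/-- At a pole of order at most `N` of an eigenfunction family `E(s) = Σ_{n ≥ -N} aₙ (s-s₀)ⁿ`,
the leading Laurent coefficient `a_{-N}` satisfies the genuine eigenvalue equation
`Δ(a_{-N}) = λ(s₀) • a_{-N}`. -/
theorem leading_laurent_coefficient_is_eigenvector
    {V : Type*} [NormedAddCommGroup V] [NormedSpace ℂ V] [CompleteSpace V]
    (Δ : V →L[ℂ] V) (s₀ : ℂ) (r : ℝ) (hr : 0 < r) (N : ℕ) (hN : 1 ≤ N)
    (a : ℤ → V) (ha : ∀ n : ℤ, n < -(N : ℤ) → a n = 0)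
    (E : ℂ → V) (lam : ℂ → ℂ)
    (hE : ∀ s : ℂ, s ≠ s₀ → ‖s - s₀‖ < r →
      HasSum (fun n : ℤ => (s - s₀) ^ n • a n) (E s))
    (hlam : ∀ s ∈ Metric.ball s₀ r, AnalyticAt ℂ lam s)
    (heq : ∀ s : ℂ, s ≠ s₀ → ‖s - s₀‖ < r → Δ (E s) = lam s • E s) :
    Δ (a (-(N : ℤ))) = lam s₀ • a (-(N : ℤ)) := by
  set b : ℕ → V := fun m => a ((m : ℤ) - N) with hbdef
  -- Step 1: the shifted series is a power series representing (s-s₀)^N • E s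
  have key : ∀ s : ℂ, s ≠ s₀ → ‖s - s₀‖ < r →
      HasSum (fun m : ℕ => (s - s₀) ^ m • b m) ((s - s₀) ^ N • E s) := by
    intro s hs hsr
    have hne : s - s₀ ≠ 0 := sub_ne_zero.mpr hs
    have h1 := (hE s hs hsr).const_smul ((s - s₀) ^ N)
    have h2 : HasSum (fun n : ℤ => (s - s₀) ^ (n + (N : ℤ)) • a n) ((s - s₀) ^ N • E s) := by
      refine h1.congr_fun fun n => ?_
      rw [zpow_add₀ hne, zpow_natCast, smul_smul, mul_comm]
    have hinj : Function.Injective (fun m : ℕ => (m : ℤ) - N) := by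
      intro m₁ m₂ h
      simpa using h
    have := (Function.Injective.hasSum_iff hinj ?_).mpr h2
    · refine this.congr_fun fun m => ?_
      simp only [Function.comp]
      rw [sub_add_cancel, zpow_natCast]
    · intro n hn
      have hlt : n < -(N : ℤ) := by
        by_contra hge
        push_neg at hge
        exact hn ⟨(n + N).toNat, by simp; omega⟩
      simp [ha n hlt]
  -- Step 2: bound the coefficients using convergence at s₁ = s₀ + r/2
  set s₁ : ℂ := s₀ + (r / 2 : ℝ) with hs₁def
  have hs₁ne : s₁ ≠ s₀ := by
    simp only [hs₁def, ne_eq, add_eq_left]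
    exact_mod_cast ne_of_gt (by positivity : (0:ℝ) < r / 2)
  have hs₁sub : s₁ - s₀ = ((r / 2 : ℝ) : ℂ) := by ring
  have hs₁abs : ‖s₁ - s₀‖ = r / 2 := by
    rw [hs₁sub, Complex.norm_real, Real.norm_eq_abs, abs_of_pos (by positivity)]
  have hsum1 := (key s₁ hs₁ne (by rw [hs₁abs]; linarith)).summable
  have htend : Tendsto (fun m : ℕ => ‖b m‖ * (r / 2) ^ m) atTop (𝓝 0) := by
    have := hsum1.tendsto_atTop_zero.norm
    simp only [norm_zero] at this
    refine this.congr fun m => ?_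
    rw [norm_smul, norm_pow, mul_comm, hs₁sub]
    rw [Complex.norm_real, Real.norm_eq_abs, abs_of_pos (show (0:ℝ) < r/2 by positivity)]
  obtain ⟨C, hC⟩ : ∃ C, ∀ m : ℕ, ‖b m‖ * (r / 2) ^ m ≤ C := by
    obtain ⟨C, hC⟩ := htend.bddAbove_range
    exact ⟨C, fun m => hC ⟨m, rfl⟩⟩
  -- the formal power series
  set p : FormalMultilinearSeries ℂ ℂ V :=
    fun m => ContinuousMultilinearMap.mkPiRing ℂ (Fin m) (b m) with hpdef
  have hradius : ((r / 2 : ℝ).toNNReal : ENNReal) ≤ p.radius := by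
    refine p.le_radius_of_bound C fun n => ?_
    rw [hpdef]
    rw [ContinuousMultilinearMap.norm_mkPiRing]
    rw [Real.coe_toNNReal _ (by positivity)]
    exact hC n
  have hrpos : (0 : ENNReal) < p.radius := by
    refine lt_of_lt_of_le ?_ hradius
    simp [Real.toNNReal_pos]
    positivity
  -- p.sum agrees with (s-s₀)^N • E s near s₀
  have hball : ∀ s : ℂ, ‖s - s₀‖ < r / 2 →
      (s - s₀) ∈ Metric.eball (0 : ℂ) p.radius := by
    intro s hs
    rw [Metric.mem_eball, edist_zero_right]
    refine lt_of_lt_of_le ?_ hradius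
    rw [enorm_eq_nnnorm, ENNReal.coe_lt_coe, ← NNReal.coe_lt_coe, coe_nnnorm,
      Real.coe_toNNReal _ (by positivity)]
    exact hs
  have hsum_eq : ∀ s : ℂ, ‖s - s₀‖ < r / 2 →
      HasSum (fun m : ℕ => (s - s₀) ^ m • b m) (p.sum (s - s₀)) := by
    intro s hs
    have := p.hasSum (hball s hs)
    refine this.congr_fun fun m => ?_
    rw [hpdef]
    rw [ContinuousMultilinearMap.mkPiRing_apply]
    congr 1
    simp [Finset.prod_const]
  have hagree : ∀ s : ℂ, s ≠ s₀ → ‖s - s₀‖ < r / 2 →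
      (s - s₀) ^ N • E s = p.sum (s - s₀) := by
    intro s hs hs' 
    exact (key s hs (by linarith)).unique (hsum_eq s hs')
  -- value at the center
  have hsum0 : p.sum 0 = a (-(N : ℤ)) := by
    have h0 : HasSum (fun m : ℕ => (0 : ℂ) ^ m • b m) (p.sum 0) := by
      simpa using hsum_eq s₀ (by simp; positivity)
    have h0' : HasSum (fun m : ℕ => (0 : ℂ) ^ m • b m) (b 0) := by
      have := hasSum_single (f := fun m : ℕ => (0 : ℂ) ^ m • b m) 0
        (fun m hm => by simp [zero_pow hm])
      simpa using this
    rw [h0.unique h0', hbdef]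
    norm_num
  -- continuity of p.sum at 0
  have hcont : ContinuousAt p.sum 0 := by
    have := (p.hasFPowerSeriesOnBall hrpos).analyticAt.continuousAt
    simpa using this
  -- the limit of F along the punctured neighborhood
  set F : ℂ → V := fun s => (s - s₀) ^ N • E s with hFdef
  have hFtend : Tendsto F (𝓝[≠] s₀) (𝓝 (a (-(N : ℤ)))) := by
    have h1 : Tendsto (fun s : ℂ => p.sum (s - s₀)) (𝓝 s₀) (𝓝 (a (-(N : ℤ)))) := by
      rw [← hsum0]
      refine hcont.tendsto.comp ?_
      have : Tendsto (fun s : ℂ => s - s₀) (𝓝 s₀) (𝓝 (s₀ - s₀)) :=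
        (continuous_id.sub continuous_const).tendsto s₀
      simpa using this
    refine Tendsto.congr' ?_ (h1.mono_left nhdsWithin_le_nhds)
    have hmem : Metric.ball s₀ (r / 2) ∈ 𝓝[≠] s₀ :=
      nhdsWithin_le_nhds (Metric.ball_mem_nhds s₀ (by positivity))
    filter_upwards [hmem, self_mem_nhdsWithin] with s hs hs'
    exact (hagree s hs' (by simpa [Complex.norm_def, Complex.dist_eq] using hs)).symm
  -- continuity of lam at s₀
  have hlamc : ContinuousAt lam s₀ := (hlam s₀ (Metric.mem_ball_self hr)).continuousAt
  -- two limits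
  have T1 : Tendsto (fun s => Δ (F s)) (𝓝[≠] s₀) (𝓝 (Δ (a (-(N : ℤ))))) :=
    (Δ.continuous.continuousAt.tendsto.comp hFtend)
  have T2 : Tendsto (fun s => lam s • F s) (𝓝[≠] s₀)
      (𝓝 (lam s₀ • a (-(N : ℤ)))) :=
    Tendsto.smul (hlamc.tendsto.mono_left nhdsWithin_le_nhds) hFtend
  have heqF : ∀ᶠ s in 𝓝[≠] s₀, Δ (F s) = lam s • F s := by
    have hmem : Metric.ball s₀ r ∈ 𝓝[≠] s₀ :=
      nhdsWithin_le_nhds (Metric.ball_mem_nhds s₀ hr)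
    filter_upwards [hmem, self_mem_nhdsWithin] with s hs hs'
    have habs : ‖s - s₀‖ < r := by
      simpa [Complex.norm_def, Complex.dist_eq] using hs
    rw [hFdef]
    simp only [map_smul]
    rw [heq s hs' habs, smul_comm]
  exact tendsto_nhds_unique (T1.congr' heqF) T2
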